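/- Assume m ≤ Q and τ* > 0, where τ* is the optimal value of the linear program (LP) with data N_1, …, N_m and budget Q. Then every feasible solution C of the integer program (IP) satisfies Σ_{i=1}^m Σ_{n=1}^{C(i)} 1/√(N_i + n) ≤ 8Q/√τ*. -/

import Mathlib

open Finset

lemma aux_sum_sqrt (N : ℕ) (k : ℕ) :
    ∑ n ∈ Finset.Icc 1 k, (1:ℝ) / Real.sqrt ((N:ℝ) + (n:ℝ)) ≤
      2 * Real.sqrt ((N:ℝ) + (k:ℝ)) - 2 * Real.sqrt (N:ℝ) := by
  induction k with
  | zero => simp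
  | succ k ih =>
    rw [Finset.sum_Icc_succ_top (by omega : 1 ≤ k + 1)]
    have h1 : (0:ℝ) ≤ (N:ℝ) + (k:ℝ) := by positivity
    have h2 : (0:ℝ) ≤ (N:ℝ) + ((k:ℝ)+1) := by positivity
    set s := Real.sqrt ((N:ℝ) + ((k:ℝ)+1)) with hs
    set t := Real.sqrt ((N:ℝ) + (k:ℝ)) with ht
    have hs2 : s^2 = (N:ℝ) + ((k:ℝ)+1) := Real.sq_sqrt h2
    have ht2 : t^2 = (N:ℝ) + (k:ℝ) := Real.sq_sqrt h1
    have hspos : 0 < s := Real.sqrt_pos.mpr (by positivity)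
    have htnn : 0 ≤ t := Real.sqrt_nonneg _
    have key : 1 / s ≤ 2 * (s - t) := by
      rw [div_le_iff₀ hspos]
      nlinarith [sq_nonneg (s - t)]
    have hcast : ((k+1:ℕ):ℝ) = (k:ℝ) + 1 := by push_cast; ring
    rw [hcast]
    linarith [ih]

lemma aux_sqrt_quarter (τ : ℝ) (hτ : 0 ≤ τ) :
    Real.sqrt (τ / 4) = Real.sqrt τ / 2 := by
  rw [show τ / 4 = τ * (1/2)^2 by ring, Real.sqrt_mul hτ,
    Real.sqrt_sq (by norm_num : (0:ℝ) ≤ 1/2)]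
  ring

theorem ip_value_le_eight_budget_div_sqrt_lp
    (m : ℕ) (hm : 1 ≤ m) (N : Fin m → ℕ) (Q : ℕ) (hmQ : m ≤ Q)
    (τstar : ℝ) (hτpos : 0 < τstar)
    (hopt : IsGreatest {τ : ℝ | ∃ nn : Fin m → ℝ, 0 ≤ τ ∧ (∀ i, 0 ≤ nn i) ∧
      (∀ i, τ ≤ (N i : ℝ) + nn i) ∧ ∑ i, nn i ≤ (Q : ℝ)} τstar)
    (C : Fin m → ℕ) (hC : ∑ i, C i ≤ Q) :
    ∑ i, ∑ n ∈ Finset.Icc 1 (C i), (1 : ℝ) / Real.sqrt ((N i : ℝ) + (n : ℝ)) ≤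
      8 * (Q : ℝ) / Real.sqrt τstar := by
  obtain ⟨⟨nn, -, hnn0, hnnτ, hnnQ⟩, hub⟩ := hopt
  have hτ1 : (1:ℝ) ≤ τstar := by
    apply hub
    refine ⟨fun _ => 1, by norm_num,
      fun i => by norm_num,
      fun i => by
        show (1:ℝ) ≤ (N i:ℝ) + 1
        have h : (0:ℝ) ≤ (N i:ℝ) := Nat.cast_nonneg _; linarith, ?_⟩
    simp only [Finset.sum_const, Finset.card_univ, Fintype.card_fin, nsmul_eq_mul, mul_one]
    exact_mod_cast hmQ
  have hsτ : Real.sqrt τstar ^ 2 = τstar := Real.sq_sqrt hτpos.le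
  have hsτpos : 0 < Real.sqrt τstar := Real.sqrt_pos.mpr hτpos
  have hquarter : Real.sqrt (τstar / 4) = Real.sqrt τstar / 2 := aux_sqrt_quarter _ hτpos.le
  set S := Finset.univ.filter (fun i : Fin m => (N i : ℝ) < τstar / 4) with hS
  have hcard : (S.card : ℝ) * (3 * τstar / 4) ≤ (Q:ℝ) := by
    have h1 : ∀ i ∈ S, 3 * τstar / 4 ≤ nn i := by
      intro i hi
      simp only [hS, Finset.mem_filter] at hi
      have := hnnτ i
      linarith [hi.2]
    calc (S.card : ℝ) * (3 * τstar / 4) = ∑ _i ∈ S, 3 * τstar / 4 := by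
            rw [Finset.sum_const, nsmul_eq_mul]
      _ ≤ ∑ i ∈ S, nn i := Finset.sum_le_sum h1
      _ ≤ ∑ i, nn i := Finset.sum_le_sum_of_subset_of_nonneg (Finset.filter_subset _ _)
            (fun i _ _ => hnn0 i)
      _ ≤ (Q:ℝ) := hnnQ
  have hper : ∀ i : Fin m,
      ∑ n ∈ Finset.Icc 1 (C i), (1 : ℝ) / Real.sqrt ((N i : ℝ) + (n : ℝ)) ≤
        (if (N i : ℝ) < τstar / 4 then Real.sqrt τstar else 0) +
          (C i : ℝ) * (2 / Real.sqrt τstar) := by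
    intro i
    rw [← Finset.sum_filter_add_sum_filter_not (Finset.Icc 1 (C i))
      (fun n : ℕ => (N i : ℝ) + (n:ℝ) < τstar / 4)]
    gcongr ?_ + ?_
    · -- small part
      by_cases hi : (N i : ℝ) < τstar / 4
      · rw [if_pos hi]
        have hxpos : 0 < τstar / 4 - (N i:ℝ) := by linarith
        have hceil : 1 ≤ ⌈τstar / 4 - (N i:ℝ)⌉ := Int.ceil_pos.mpr hxpos
        set k : ℕ := (⌈τstar / 4 - (N i:ℝ)⌉).toNat - 1 with hk
        have hkx : (k:ℝ) ≤ τstar / 4 - (N i:ℝ) := by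
          have h2 : ((⌈τstar / 4 - (N i:ℝ)⌉.toNat : ℕ) : ℝ) = (⌈τstar / 4 - (N i:ℝ)⌉ : ℝ) := by
            exact_mod_cast congrArg (Int.cast : ℤ → ℝ) (Int.toNat_of_nonneg (by omega))
          have h3 : (k:ℝ) = ((⌈τstar / 4 - (N i:ℝ)⌉.toNat : ℕ):ℝ) - 1 := by
            have h3' : k + 1 = ⌈τstar / 4 - (N i:ℝ)⌉.toNat := by omega
            have := congrArg (Nat.cast : ℕ → ℝ) h3'
            push_cast at this
            linarith
          have h4 : (⌈τstar / 4 - (N i:ℝ)⌉ : ℝ) < (τstar / 4 - (N i:ℝ)) + 1 :=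
            Int.ceil_lt_add_one _
          rw [h3, h2]; linarith
        have hsub : (Finset.Icc 1 (C i)).filter (fun n : ℕ => (N i : ℝ) + (n:ℝ) < τstar / 4) ⊆
            Finset.Icc 1 k := by
          intro n hn
          simp only [Finset.mem_filter, Finset.mem_Icc] at hn ⊢
          refine ⟨hn.1.1, ?_⟩
          have hnx : (n:ℝ) < τstar / 4 - (N i:ℝ) := by linarith [hn.2]
          have h5 : (n:ℤ) < ⌈τstar / 4 - (N i:ℝ)⌉ := by
            by_contra hcon
            push_neg at hcon
            have : ((⌈τstar / 4 - (N i:ℝ)⌉:ℤ):ℝ) ≤ ((n:ℤ):ℝ) := by exact_mod_cast hcon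
            push_cast at this
            linarith [Int.le_ceil (τstar / 4 - (N i:ℝ))]
          omega
        calc ∑ n ∈ (Finset.Icc 1 (C i)).filter (fun n : ℕ => (N i : ℝ) + (n:ℝ) < τstar / 4),
              (1 : ℝ) / Real.sqrt ((N i : ℝ) + (n : ℝ))
            ≤ ∑ n ∈ Finset.Icc 1 k, (1 : ℝ) / Real.sqrt ((N i : ℝ) + (n : ℝ)) :=
              Finset.sum_le_sum_of_subset_of_nonneg hsub (fun n _ _ => by positivity)
          _ ≤ 2 * Real.sqrt ((N i:ℝ) + (k:ℝ)) - 2 * Real.sqrt (N i:ℝ) := aux_sum_sqrt _ _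
          _ ≤ 2 * Real.sqrt (τstar / 4) := by
              have h5 : Real.sqrt ((N i:ℝ) + (k:ℝ)) ≤ Real.sqrt (τstar / 4) :=
                Real.sqrt_le_sqrt (by linarith)
              have := Real.sqrt_nonneg (N i:ℝ)
              linarith
          _ = Real.sqrt τstar := by rw [hquarter]; ring
      · rw [if_neg hi]
        push_neg at hi
        have hemp : (Finset.Icc 1 (C i)).filter
            (fun n : ℕ => (N i : ℝ) + (n:ℝ) < τstar / 4) = ∅ := by
          apply Finset.filter_false_of_mem
          intro n hn
          push_neg
          have : (0:ℝ) ≤ (n:ℝ) := by positivity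
          linarith
        rw [hemp]; simp
    · -- big part
      calc ∑ n ∈ (Finset.Icc 1 (C i)).filter (fun n : ℕ => ¬((N i : ℝ) + (n:ℝ) < τstar / 4)),
            (1 : ℝ) / Real.sqrt ((N i : ℝ) + (n : ℝ))
          ≤ ∑ _n ∈ (Finset.Icc 1 (C i)).filter (fun n : ℕ => ¬((N i : ℝ) + (n:ℝ) < τstar / 4)),
            (2 / Real.sqrt τstar) := by
            apply Finset.sum_le_sum
            intro n hn
            simp only [Finset.mem_filter, not_lt] at hn
            have h6 : Real.sqrt (τstar / 4) ≤ Real.sqrt ((N i:ℝ) + (n:ℝ)) :=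
              Real.sqrt_le_sqrt hn.2
            rw [hquarter] at h6
            have h8 : 0 < Real.sqrt ((N i:ℝ) + (n:ℝ)) := by
              apply Real.sqrt_pos.mpr
              have hn1 : 1 ≤ n := (Finset.mem_Icc.mp hn.1).1
              have h0 : (1:ℝ) ≤ (n:ℝ) := by exact_mod_cast hn1
              have h0' : (0:ℝ) ≤ (N i:ℝ) := Nat.cast_nonneg _
              linarith
            rw [div_le_div_iff₀ h8 hsτpos]
            nlinarith
        _ ≤ (C i : ℝ) * (2 / Real.sqrt τstar) := by
            rw [Finset.sum_const, nsmul_eq_mul]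
            have hcarde : (((Finset.Icc 1 (C i)).filter
                (fun n : ℕ => ¬((N i : ℝ) + (n:ℝ) < τstar / 4))).card : ℝ) ≤ (C i:ℝ) := by
              exact_mod_cast (Finset.card_le_card (Finset.filter_subset _ _)).trans
                (by rw [Nat.card_Icc]; omega)
            exact mul_le_mul_of_nonneg_right hcarde (by positivity)
  calc ∑ i, ∑ n ∈ Finset.Icc 1 (C i), (1 : ℝ) / Real.sqrt ((N i : ℝ) + (n : ℝ))
      ≤ ∑ i, ((if (N i : ℝ) < τstar / 4 then Real.sqrt τstar else 0) +
          (C i : ℝ) * (2 / Real.sqrt τstar)) := Finset.sum_le_sum (fun i _ => hper i)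
    _ = (S.card : ℝ) * Real.sqrt τstar + (∑ i, (C i:ℝ)) * (2 / Real.sqrt τstar) := by
        rw [Finset.sum_add_distrib, ← Finset.sum_filter, Finset.sum_const, nsmul_eq_mul,
          ← Finset.sum_mul]
    _ ≤ 8 * (Q : ℝ) / Real.sqrt τstar := by
        have hCQ : (∑ i, (C i:ℝ)) ≤ (Q:ℝ) := by
          have h : ((∑ i, C i : ℕ):ℝ) ≤ (Q:ℝ) := by exact_mod_cast hC
          push_cast at h; linarith
        have hCnn : 0 ≤ ∑ i, (C i:ℝ) := Finset.sum_nonneg (fun i _ => by positivity)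
        have hQnn : (0:ℝ) ≤ Q := by positivity
        have h9 : (S.card:ℝ) * Real.sqrt τstar ≤ 4/3 * (Q:ℝ) / Real.sqrt τstar := by
          rw [le_div_iff₀ hsτpos]
          nlinarith [hcard, hsτ, hsτpos, (Nat.cast_nonneg S.card : (0:ℝ) ≤ (S.card:ℝ))]
        have h10 : (∑ i, (C i:ℝ)) * (2 / Real.sqrt τstar) ≤ 2 * (Q:ℝ) / Real.sqrt τstar := by
          rw [show 2 * (Q:ℝ) / Real.sqrt τstar = (Q:ℝ) * (2 / Real.sqrt τstar) by ring]
          exact mul_le_mul_of_nonneg_right hCQ (by positivity)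
        have h11 : 4/3 * (Q:ℝ) / Real.sqrt τstar + 2 * (Q:ℝ) / Real.sqrt τstar ≤
            8 * (Q : ℝ) / Real.sqrt τstar := by
          rw [← add_div, div_le_div_iff₀ hsτpos hsτpos]
          nlinarith
        linarith
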